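/- arXiv:1110.5425 — 3 statements merged into one kernel-verified Lean document; each statement's English description precedes it below -/
import Mathlib

section
/- Under the gluing setup with crossing data, the signed generating function of even subsets factorizes through the cut: Σ_{F ⊆ E even} (−1)^{m(F)} ∏_{e∈F} x_e = Σ_{A ⊆ C} N1^q(A)·N2^q(A), where for j = 1,2, Nj^q(A) = Σ_{F ⊆ Ej with boundary pattern A} (−1)^{m(F)} ∏_{e∈F} x_e. (This is Theorem 3.3 of the paper, the signed Ising gluing formula E(G,q,x) = ⟨E(G1^S, q1, y1), E(G2^S, q2, y2)⟩, after the sign (−1)^{q([F])} of the quadratic form q is expressed combinatorially via Theorem 3.2 as (−1)^{m(F)}.) -/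
open Finset

/-- Degree of the vertex `v` in the graph `(V, F)`: each edge `e ∈ F` contributes `1` for each
of its two (ordered) endpoints equal to `v`; in particular a loop at `v` contributes `2`. -/
def degIn {V E : Type*} [DecidableEq V] (ends : E → V × V) (F : Finset E) (v : V) : ℕ :=
  ∑ e ∈ F, ((if (ends e).1 = v then 1 else 0) + (if (ends e).2 = v then 1 else 0))

/-- The quadratic-form exponent `m(F) = R1(F)·R2(F) + R3(F)·R4(F) + Σ_i Ri(F)·εi ∈ ℤ/2`,
where `Ri(F) = Σ_{e∈F} ri(e)`. -/
def mExp {E : Type*} [DecidableEq E] (r : E → Fin 4 → ZMod 2) (ε : Fin 4 → ZMod 2)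
    (F : Finset E) : ZMod 2 :=
  (∑ e ∈ F, r e 0) * (∑ e ∈ F, r e 1) + (∑ e ∈ F, r e 2) * (∑ e ∈ F, r e 3) +
    ∑ i : Fin 4, (∑ e ∈ F, r e i) * ε i

lemma degIn_union {V E : Type*} [DecidableEq V] [DecidableEq E] (ends : E → V × V)
    {F1 F2 : Finset E} (h : Disjoint F1 F2) (v : V) :
    degIn ends (F1 ∪ F2) v = degIn ends F1 v + degIn ends F2 v := by
  unfold degIn; exact Finset.sum_union h

lemma degIn_eq_zero {V E : Type*} [DecidableEq V] (ends : E → V × V) {F : Finset E} {v : V}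
    (h : ∀ e ∈ F, (ends e).1 ≠ v ∧ (ends e).2 ≠ v) : degIn ends F v = 0 := by
  unfold degIn
  refine Finset.sum_eq_zero fun e he => ?_
  simp [(h e he).1, (h e he).2]

lemma neg_one_pow_val_add {R : Type*} [CommRing R] (a b : ZMod 2) :
    ((-1 : R)) ^ (a + b).val = (-1) ^ a.val * (-1) ^ b.val := by
  rcases (by decide : ∀ c : ZMod 2, c = 0 ∨ c = 1) a with rfl | rfl <;>
    rcases (by decide : ∀ c : ZMod 2, c = 0 ∨ c = 1) b with rfl | rfl <;>
    simp [show ((1 : ZMod 2) + 1) = 0 from rfl, ZMod.val_one]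

lemma mExp_union {E : Type*} [DecidableEq E] (r : E → Fin 4 → ZMod 2) (ε : Fin 4 → ZMod 2)
    {F1 F2 : Finset E} (hd : Disjoint F1 F2)
    (h1 : ∀ e ∈ F1, r e 2 = 0 ∧ r e 3 = 0)
    (h2 : ∀ e ∈ F2, r e 0 = 0 ∧ r e 1 = 0) :
    mExp r ε (F1 ∪ F2) = mExp r ε F1 + mExp r ε F2 := by
  have s : ∀ i, ∑ e ∈ F1 ∪ F2, r e i = ∑ e ∈ F1, r e i + ∑ e ∈ F2, r e i :=
    fun i => Finset.sum_union hd
  have z12 : ∑ e ∈ F1, r e 2 = 0 := Finset.sum_eq_zero fun e he => (h1 e he).1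
  have z13 : ∑ e ∈ F1, r e 3 = 0 := Finset.sum_eq_zero fun e he => (h1 e he).2
  have z20 : ∑ e ∈ F2, r e 0 = 0 := Finset.sum_eq_zero fun e he => (h2 e he).1
  have z21 : ∑ e ∈ F2, r e 1 = 0 := Finset.sum_eq_zero fun e he => (h2 e he).2
  unfold mExp
  rw [Fin.sum_univ_four, Fin.sum_univ_four, Fin.sum_univ_four]
  rw [s 0, s 1, s 2, s 3, z12, z13, z20, z21]
  ring


open scoped Classical in
/-- Theorem 3.3 of the paper, signs expressed via Theorem 3.2: under the gluing
setup with crossing data, the signed generating function of even subsets factorizes through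
the cut: `Σ_{F ⊆ E even} (−1)^{m(F)} ∏_{e∈F} x_e = Σ_{A ⊆ C} N1^q(A)·N2^q(A)`. -/
theorem signed_even_subsets_gluing {V E : Type*} [Fintype V] [DecidableEq V]
    [Fintype E] [DecidableEq E] {R : Type*} [CommRing R]
    (V1 V2 C : Finset V)
    (hd12 : Disjoint V1 V2) (hd1C : Disjoint V1 C) (hd2C : Disjoint V2 C)
    (hVunion : V1 ∪ V2 ∪ C = Finset.univ)
    (hCeven : Even C.card) (hV1even : Even V1.card) (hV2even : Even V2.card)
    (E1 E2 : Finset E) (hdE : Disjoint E1 E2) (hEunion : E1 ∪ E2 = Finset.univ)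
    (ends : E → V × V)
    (hE1 : ∀ e ∈ E1, (ends e).1 ∈ V1 ∪ C ∧ (ends e).2 ∈ V1 ∪ C)
    (hE2 : ∀ e ∈ E2, (ends e).1 ∈ V2 ∪ C ∧ (ends e).2 ∈ V2 ∪ C)
    (x : E → R)
    (r : E → Fin 4 → ZMod 2) (ε : Fin 4 → ZMod 2)
    (hr1 : ∀ e ∈ E1, r e 2 = 0 ∧ r e 3 = 0)
    (hr2 : ∀ e ∈ E2, r e 0 = 0 ∧ r e 1 = 0) :
    (∑ F ∈ Finset.univ.powerset.filter (fun F : Finset E => ∀ v : V, Even (degIn ends F v)),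
        (-1 : R) ^ (mExp r ε F).val * ∏ e ∈ F, x e) =
      ∑ A ∈ C.powerset,
        (∑ F ∈ E1.powerset.filter (fun F : Finset E =>
            (∀ v ∈ V1, Even (degIn ends F v)) ∧ ∀ v ∈ C, (Odd (degIn ends F v) ↔ v ∈ A)),
          (-1 : R) ^ (mExp r ε F).val * ∏ e ∈ F, x e) *
        ∑ F ∈ E2.powerset.filter (fun F : Finset E =>
            (∀ v ∈ V2, Even (degIn ends F v)) ∧ ∀ v ∈ C, (Odd (degIn ends F v) ↔ v ∈ A)),
          (-1 : R) ^ (mExp r ε F).val * ∏ e ∈ F, x e := by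
  classical
  set t : Finset E → R := fun F => (-1 : R) ^ (mExp r ε F).val * ∏ e ∈ F, x e with ht
  -- degree of an E2-subset vanishes on V1, and vice versa
  have deg2zero : ∀ {F : Finset E}, F ⊆ E2 → ∀ v ∈ V1, degIn ends F v = 0 := by
    intro F hF v hv
    refine degIn_eq_zero ends fun e he => ?_
    have h := hE2 e (hF he)
    constructor
    · rintro rfl
      rcases Finset.mem_union.mp h.1 with h' | h'
      · exact (Finset.disjoint_left.mp hd12 hv) h'
      · exact (Finset.disjoint_left.mp hd1C hv) h'
    · rintro rfl
      rcases Finset.mem_union.mp h.2 with h' | h'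
      · exact (Finset.disjoint_left.mp hd12 hv) h'
      · exact (Finset.disjoint_left.mp hd1C hv) h'
  have deg1zero : ∀ {F : Finset E}, F ⊆ E1 → ∀ v ∈ V2, degIn ends F v = 0 := by
    intro F hF v hv
    refine degIn_eq_zero ends fun e he => ?_
    have h := hE1 e (hF he)
    constructor
    · rintro rfl
      rcases Finset.mem_union.mp h.1 with h' | h'
      · exact (Finset.disjoint_left.mp hd12 h') hv
      · exact (Finset.disjoint_left.mp hd2C hv) h'
    · rintro rfl
      rcases Finset.mem_union.mp h.2 with h' | h'
      · exact (Finset.disjoint_left.mp hd12 h') hv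
      · exact (Finset.disjoint_left.mp hd2C hv) h'
  have tmul : ∀ {F1 F2 : Finset E}, F1 ⊆ E1 → F2 ⊆ E2 → t (F1 ∪ F2) = t F1 * t F2 := by
    intro F1 F2 h1 h2
    have hd : Disjoint F1 F2 := hdE.mono h1 h2
    simp only [ht]
    rw [mExp_union r ε hd (fun e he => hr1 e (h1 he)) (fun e he => hr2 e (h2 he)),
      neg_one_pow_val_add, Finset.prod_union hd]
    ring
  -- the combined evenness condition for a pair
  set P : Finset E × Finset E → Prop :=
    fun p => ∀ v : V, Even (degIn ends (p.1 ∪ p.2) v) with hP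
  -- Step A : LHS as a sum over pairs
  have keyA : (∑ F ∈ Finset.univ.powerset.filter
        (fun F : Finset E => ∀ v : V, Even (degIn ends F v)), t F) =
      ∑ p ∈ (E1.powerset ×ˢ E2.powerset).filter P, t p.1 * t p.2 := by
    refine Finset.sum_bij' (fun F _ => (F ∩ E1, F ∩ E2)) (fun p _ => p.1 ∪ p.2)
      ?_ ?_ ?_ ?_ ?_
    · intro F hF
      simp only [Finset.mem_filter, Finset.mem_powerset, Finset.mem_product] at hF ⊢
      have hU : F ∩ E1 ∪ F ∩ E2 = F := by
        rw [← Finset.inter_union_distrib_left, hEunion, Finset.inter_univ]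
      refine ⟨⟨Finset.inter_subset_right, Finset.inter_subset_right⟩, ?_⟩
      simpa only [hP, hU] using hF.2
    · intro p hp
      simp only [Finset.mem_filter, Finset.mem_powerset, Finset.mem_product] at hp ⊢
      exact ⟨Finset.subset_univ _, hp.2⟩
    · intro F hF
      show F ∩ E1 ∪ F ∩ E2 = F
      rw [← Finset.inter_union_distrib_left, hEunion, Finset.inter_univ]
    · intro p hp
      simp only [Finset.mem_filter, Finset.mem_powerset, Finset.mem_product] at hp
      have h1 : p.1 ∩ E1 = p.1 := Finset.inter_eq_left.mpr hp.1.1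
      have h2 : p.2 ∩ E1 = ∅ :=
        Finset.disjoint_iff_inter_eq_empty.mp ((hdE.symm.mono_left hp.1.2))
      have h3 : p.1 ∩ E2 = ∅ :=
        Finset.disjoint_iff_inter_eq_empty.mp (hdE.mono_left hp.1.1)
      have h4 : p.2 ∩ E2 = p.2 := Finset.inter_eq_left.mpr hp.1.2
      ext <;> simp [Finset.union_inter_distrib_right, h1, h2, h3, h4]
    · intro F hF
      simp only [Finset.mem_filter, Finset.mem_powerset] at hF
      have hU : F ∩ E1 ∪ F ∩ E2 = F := by
        rw [← Finset.inter_union_distrib_left, hEunion, Finset.inter_univ]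
      calc t F = t (F ∩ E1 ∪ F ∩ E2) := by rw [hU]
        _ = t (F ∩ E1) * t (F ∩ E2) :=
          tmul Finset.inter_subset_right Finset.inter_subset_right
  -- pattern condition for a pair and a boundary set A
  set Q : Finset V → Finset E × Finset E → Prop := fun A p =>
    ((∀ v ∈ V1, Even (degIn ends p.1 v)) ∧ ∀ v ∈ C, (Odd (degIn ends p.1 v) ↔ v ∈ A)) ∧
    ((∀ v ∈ V2, Even (degIn ends p.2 v)) ∧ ∀ v ∈ C, (Odd (degIn ends p.2 v) ↔ v ∈ A))
    with hQ
  -- Step B : RHS as the same sum over pairs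
  have keyB : (∑ A ∈ C.powerset,
        (∑ F ∈ E1.powerset.filter (fun F : Finset E =>
            (∀ v ∈ V1, Even (degIn ends F v)) ∧ ∀ v ∈ C, (Odd (degIn ends F v) ↔ v ∈ A)), t F) *
        ∑ F ∈ E2.powerset.filter (fun F : Finset E =>
            (∀ v ∈ V2, Even (degIn ends F v)) ∧ ∀ v ∈ C, (Odd (degIn ends F v) ↔ v ∈ A)), t F) =
      ∑ p ∈ (E1.powerset ×ˢ E2.powerset).filter P, t p.1 * t p.2 := by
    have step1 : ∀ A ∈ C.powerset,
        (∑ F ∈ E1.powerset.filter (fun F : Finset E =>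
            (∀ v ∈ V1, Even (degIn ends F v)) ∧ ∀ v ∈ C, (Odd (degIn ends F v) ↔ v ∈ A)), t F) *
        (∑ F ∈ E2.powerset.filter (fun F : Finset E =>
            (∀ v ∈ V2, Even (degIn ends F v)) ∧ ∀ v ∈ C, (Odd (degIn ends F v) ↔ v ∈ A)), t F) =
        ∑ p ∈ E1.powerset ×ˢ E2.powerset, if Q A p then t p.1 * t p.2 else 0 := by
      intro A hA
      rw [Finset.sum_mul_sum, ← Finset.sum_product']
      have hset : (E1.powerset.filter (fun F : Finset E =>
            (∀ v ∈ V1, Even (degIn ends F v)) ∧ ∀ v ∈ C, (Odd (degIn ends F v) ↔ v ∈ A))) ×ˢ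
          (E2.powerset.filter (fun F : Finset E =>
            (∀ v ∈ V2, Even (degIn ends F v)) ∧ ∀ v ∈ C, (Odd (degIn ends F v) ↔ v ∈ A))) =
          (E1.powerset ×ˢ E2.powerset).filter (Q A) := by
        ext p
        simp only [Finset.mem_product, Finset.mem_filter, Finset.mem_powerset, hQ]
        tauto
      rw [hset, Finset.sum_filter]
    rw [Finset.sum_congr rfl step1, Finset.sum_comm]
    rw [Finset.sum_filter]
    refine Finset.sum_congr rfl fun p hp => ?_
    simp only [Finset.mem_product, Finset.mem_powerset] at hp
    by_cases hPp : P p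
    · -- exactly one A works, namely the odd set of p.1 on C
      set A0 : Finset V := C.filter (fun v => Odd (degIn ends p.1 v)) with hA0
      have hdisj : Disjoint p.1 p.2 := hdE.mono hp.1 hp.2
      have hQA0 : Q A0 p := by
        refine ⟨⟨?_, ?_⟩, ?_, ?_⟩
        · intro v hv
          have := hPp v
          rw [degIn_union ends hdisj, deg2zero hp.2 v hv, Nat.add_zero] at this
          exact this
        · intro v hv
          simp [hA0, hv]
        · intro v hv
          have := hPp v
          rw [degIn_union ends hdisj, deg1zero hp.1 v hv, Nat.zero_add] at this
          exact this
        · intro v hv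
          have := hPp v
          rw [degIn_union ends hdisj, Nat.even_add] at this
          simp only [hA0, Finset.mem_filter, hv, true_and]
          rw [← Nat.not_even_iff_odd, ← Nat.not_even_iff_odd, not_iff_not]
          exact this.symm
      have huniq : ∀ A ∈ C.powerset, Q A p → A = A0 := by
        intro A hA hQAp
        have hsub := Finset.mem_powerset.mp hA
        ext v
        simp only [hA0, Finset.mem_filter]
        constructor
        · intro hvA
          have hvC := hsub hvA
          exact ⟨hvC, (hQAp.1.2 v hvC).mpr hvA⟩
        · rintro ⟨hvC, hodd⟩
          exact (hQAp.1.2 v hvC).mp hodd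
      rw [if_pos hPp]
      rw [Finset.sum_eq_single A0]
      · rw [if_pos hQA0]
      · intro A hA hne
        rw [if_neg]
        intro hQAp
        exact hne (huniq A hA hQAp)
      · intro hA0mem
        exact absurd (Finset.mem_powerset.mpr (Finset.filter_subset _ _)) hA0mem
    · -- no A works
      rw [if_neg hPp]
      refine Finset.sum_eq_zero fun A hA => ?_
      rw [if_neg]
      intro hQAp
      apply hPp
      intro v
      have hdisj : Disjoint p.1 p.2 := hdE.mono hp.1 hp.2
      rw [degIn_union ends hdisj]
      have hv : v ∈ V1 ∪ V2 ∪ C := by rw [hVunion]; exact Finset.mem_univ v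
      rcases Finset.mem_union.mp hv with hv' | hvC
      · rcases Finset.mem_union.mp hv' with hv1 | hv2
        · rw [deg2zero hp.2 v hv1, Nat.add_zero]
          exact hQAp.1.1 v hv1
        · rw [deg1zero hp.1 v hv2, Nat.zero_add]
          exact hQAp.2.1 v hv2
      · rw [Nat.even_add]
        rw [← not_iff_not, Nat.not_even_iff_odd, Nat.not_even_iff_odd,
          hQAp.1.2 v hvC, hQAp.2.2 v hvC]
  rw [keyA, ← keyB]
end

section
/- Let k ≥ 1 and let S′ be the core graph: the simple graph with vertices u_1, …, u_{6k} and w_i, t_i for i = 1, …, k, and edges {u_j, u_{j+1}} for 1 ≤ j < 6k, {u_{3j−2}, u_{3j}} for 1 ≤ j ≤ 2k, and {u_{6i−4}, w_i}, {w_i, t_i} for 1 ≤ i ≤ k. Then for every subset A ⊆ {t_1, …, t_k}: if |A| is even, there is exactly one matching of S′ (a set of pairwise non-adjacent edges) covering every vertex of S′ not in A exactly once and covering no vertex of A; and if |A| is odd, there is no such matching. (This is Observation 3.4 of the paper.) -/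
open Finset

/-- Vertices of the core graph `S′`: the `u_1, …, u_{6k}` (left), the `w_1, …, w_k`
(middle) and the `t_1, …, t_k` (right). -/
abbrev CoreVert (k : ℕ) := Fin (6 * k) ⊕ (Fin k ⊕ Fin k)

/-- Edges of the core graph `S′`: the path edges `{u_j, u_{j+1}}` (`1 ≤ j < 6k`), the chords
`{u_{3j−2}, u_{3j}}` (`1 ≤ j ≤ 2k`), the edges `{u_{6i−4}, w_i}` and the edges `{w_i, t_i}`
(`1 ≤ i ≤ k`). -/
abbrev CoreEdge (k : ℕ) := (Fin (6 * k - 1) ⊕ Fin (2 * k)) ⊕ (Fin k ⊕ Fin k)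

/-- The two endpoints of each edge of the core graph `S′` (indices are `0`-based). -/
def coreEnds (k : ℕ) : CoreEdge k → CoreVert k × CoreVert k
  | Sum.inl (Sum.inl j) =>
      (Sum.inl ⟨j.val, by have := j.isLt; omega⟩,
       Sum.inl ⟨j.val + 1, by have := j.isLt; omega⟩)
  | Sum.inl (Sum.inr j) =>
      (Sum.inl ⟨3 * j.val, by have := j.isLt; omega⟩,
       Sum.inl ⟨3 * j.val + 2, by have := j.isLt; omega⟩)
  | Sum.inr (Sum.inl i) =>
      (Sum.inl ⟨6 * i.val + 1, by have := i.isLt; omega⟩, Sum.inr (Sum.inl i))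
  | Sum.inr (Sum.inr i) => (Sum.inr (Sum.inl i), Sum.inr (Sum.inr i))

namespace CoreProof

lemma ite_add_ite' (c : Prop) [Decidable c] (a b : ℕ) :
    (if c then a + b else 0) = (if c then a else 0) + (if c then b else 0) := by
  split <;> simp

lemma sum_range_eq_single (m n : ℕ) (f : ℕ → ℕ) (hf : ∀ j, m ≤ j → f j = 0) :
    ∑ j ∈ range m, (if j = n then f j else 0) = f n := by
  rw [Finset.sum_ite_eq' (range m) n f]
  by_cases h : n < m
  · simp [h]
  · simp [h, hf n (by omega)]

lemma sum_range_single' (m n d : ℕ) (E : ℕ → ℕ) (cnd : Prop) [Decidable cnd]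
    (hiff : ∀ j, E j = n ↔ cnd ∧ j = d) (f : ℕ → ℕ) (hf : ∀ j, m ≤ j → f j = 0) :
    ∑ j ∈ range m, (if E j = n then f j else 0) = if cnd then f d else 0 := by
  by_cases hc : cnd
  · rw [if_pos hc,
      Finset.sum_congr rfl (fun j _ =>
        if_congr (show (E j = n) ↔ (j = d) by rw [hiff j]; simp [hc]) rfl rfl),
      sum_range_eq_single m d f hf]
  · rw [if_neg hc, Finset.sum_eq_zero]
    intro j _
    rw [if_neg]
    rw [hiff j]
    tauto

section degFormula

variable (k : ℕ) (p : CoreEdge k → Prop) [DecidablePred p]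

def pathIn (j : ℕ) : ℕ :=
  if h : j < 6 * k - 1 then (if p (.inl (.inl ⟨j, h⟩)) then 1 else 0) else 0
def chordIn (b : ℕ) : ℕ :=
  if h : b < 2 * k then (if p (.inl (.inr ⟨b, h⟩)) then 1 else 0) else 0
def wIn (i : ℕ) : ℕ :=
  if h : i < k then (if p (.inr (.inl ⟨i, h⟩)) then 1 else 0) else 0
def tIn (i : ℕ) : ℕ :=
  if h : i < k then (if p (.inr (.inr ⟨i, h⟩)) then 1 else 0) else 0

lemma pathIn_lt (j : Fin (6 * k - 1)) :
    pathIn k p j.val = if p (.inl (.inl j)) then 1 else 0 := by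
  simp [pathIn, j.isLt]

lemma chordIn_lt (b : Fin (2 * k)) :
    chordIn k p b.val = if p (.inl (.inr b)) then 1 else 0 := by
  simp [chordIn, b.isLt]

lemma wIn_lt (i : Fin k) :
    wIn k p i.val = if p (.inr (.inl i)) then 1 else 0 := by
  simp [wIn, i.isLt]

lemma tIn_lt (i : Fin k) :
    tIn k p i.val = if p (.inr (.inr i)) then 1 else 0 := by
  simp [tIn, i.isLt]

lemma pathIn_le (j : ℕ) : pathIn k p j ≤ 1 := by
  unfold pathIn; split <;> [skip; omega]; split <;> omega

lemma chordIn_le (b : ℕ) : chordIn k p b ≤ 1 := by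
  unfold chordIn; split <;> [skip; omega]; split <;> omega

lemma pathIn_big (j : ℕ) (h : 6 * k - 1 ≤ j) : pathIn k p j = 0 := by
  unfold pathIn; rw [dif_neg (by omega)]

lemma chordIn_big (b : ℕ) (h : 2 * k ≤ b) : chordIn k p b = 0 := by
  unfold chordIn; rw [dif_neg (by omega)]

lemma wIn_big (i : ℕ) (h : k ≤ i) : wIn k p i = 0 := by
  unfold wIn; rw [dif_neg (by omega)]

lemma tIn_big (i : ℕ) (h : k ≤ i) : tIn k p i = 0 := by
  unfold tIn; rw [dif_neg (by omega)]

lemma deg_t (i : Fin k) :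
    degIn (coreEnds k) (univ.filter p) (.inr (.inr i)) = tIn k p i.val := by
  unfold degIn
  rw [Finset.sum_filter, Fintype.sum_sum_type, Fintype.sum_sum_type, Fintype.sum_sum_type]
  simp only [coreEnds]
  simp only [reduceCtorEq, if_false, add_zero, zero_add, ite_self, Finset.sum_const_zero,
    Sum.inr.injEq, Fin.ext_iff]
  rw [Finset.sum_congr rfl (fun x _ => show
      (if p (Sum.inr (Sum.inr x)) then if (x : ℕ) = (i : ℕ) then 1 else 0 else 0)
        = (if (x : ℕ) = (i : ℕ) then tIn k p x.val else 0) by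
    rw [tIn_lt]; by_cases hp : p (Sum.inr (Sum.inr x)) <;> simp [hp])]
  rw [Fin.sum_univ_eq_sum_range (fun j => if j = (i : ℕ) then tIn k p j else 0) k,
    sum_range_eq_single k (i : ℕ) _ (tIn_big k p)]

lemma deg_w (i : Fin k) :
    degIn (coreEnds k) (univ.filter p) (.inr (.inl i)) = wIn k p i.val + tIn k p i.val := by
  unfold degIn
  rw [Finset.sum_filter, Fintype.sum_sum_type, Fintype.sum_sum_type, Fintype.sum_sum_type]
  simp only [coreEnds]
  simp only [reduceCtorEq, if_false, add_zero, zero_add, ite_self, Finset.sum_const_zero,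
    Sum.inr.injEq, Sum.inl.injEq, Fin.ext_iff]
  rw [Finset.sum_congr rfl (fun x _ => show
      (if p (Sum.inr (Sum.inl x)) then if (x : ℕ) = (i : ℕ) then 1 else 0 else 0)
        = (if (x : ℕ) = (i : ℕ) then wIn k p x.val else 0) by
    rw [wIn_lt]; by_cases hp : p (Sum.inr (Sum.inl x)) <;> simp [hp])]
  rw [Finset.sum_congr rfl (fun x _ => show
      (if p (Sum.inr (Sum.inr x)) then if (x : ℕ) = (i : ℕ) then 1 else 0 else 0)
        = (if (x : ℕ) = (i : ℕ) then tIn k p x.val else 0) by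
    rw [tIn_lt]; by_cases hp : p (Sum.inr (Sum.inr x)) <;> simp [hp])]
  rw [Fin.sum_univ_eq_sum_range (fun j => if j = (i : ℕ) then wIn k p j else 0) k,
    sum_range_eq_single k (i : ℕ) _ (wIn_big k p),
    Fin.sum_univ_eq_sum_range (fun j => if j = (i : ℕ) then tIn k p j else 0) k,
    sum_range_eq_single k (i : ℕ) _ (tIn_big k p)]

lemma deg_u (u : Fin (6 * k)) :
    degIn (coreEnds k) (univ.filter p) (.inl u) =
      pathIn k p u.val + (if 1 ≤ u.val then pathIn k p (u.val - 1) else 0)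
        + (if u.val % 3 = 0 ∨ u.val % 3 = 2 then chordIn k p (u.val / 3) else 0)
        + (if u.val % 6 = 1 then wIn k p (u.val / 6) else 0) := by
  unfold degIn
  rw [Finset.sum_filter, Fintype.sum_sum_type, Fintype.sum_sum_type, Fintype.sum_sum_type]
  simp only [coreEnds]
  simp only [reduceCtorEq, if_false, add_zero, zero_add, ite_self, Finset.sum_const_zero,
    Sum.inl.injEq, Fin.ext_iff]
  rw [Finset.sum_congr rfl (fun x _ => show
      (if p (Sum.inl (Sum.inl x)) then
          (if (x : ℕ) = (u : ℕ) then 1 else 0) + (if (x : ℕ) + 1 = (u : ℕ) then 1 else 0)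
        else 0)
        = (if (x : ℕ) = (u : ℕ) then pathIn k p x.val else 0)
          + (if (x : ℕ) + 1 = (u : ℕ) then pathIn k p x.val else 0) by
    rw [pathIn_lt]; by_cases hp : p (Sum.inl (Sum.inl x)) <;> simp [hp]),
    Finset.sum_add_distrib]
  rw [Finset.sum_congr rfl (fun x _ => show
      (if p (Sum.inl (Sum.inr x)) then
          (if 3 * (x : ℕ) = (u : ℕ) then 1 else 0) + (if 3 * (x : ℕ) + 2 = (u : ℕ) then 1 else 0)
        else 0)
        = (if 3 * (x : ℕ) = (u : ℕ) then chordIn k p x.val else 0)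
          + (if 3 * (x : ℕ) + 2 = (u : ℕ) then chordIn k p x.val else 0) by
    rw [chordIn_lt]; by_cases hp : p (Sum.inl (Sum.inr x)) <;> simp [hp]),
    Finset.sum_add_distrib]
  rw [Finset.sum_congr rfl (fun x _ => show
      (if p (Sum.inr (Sum.inl x)) then (if 6 * (x : ℕ) + 1 = (u : ℕ) then 1 else 0) else 0)
        = (if 6 * (x : ℕ) + 1 = (u : ℕ) then wIn k p x.val else 0) by
    rw [wIn_lt]; by_cases hp : p (Sum.inr (Sum.inl x)) <;> simp [hp])]
  rw [Fin.sum_univ_eq_sum_range (fun j => if j = (u : ℕ) then pathIn k p j else 0) (6 * k - 1),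
    sum_range_eq_single (6 * k - 1) (u : ℕ) _ (pathIn_big k p)]
  rw [Fin.sum_univ_eq_sum_range (fun j => if j + 1 = (u : ℕ) then pathIn k p j else 0) (6 * k - 1),
    sum_range_single' (6 * k - 1) (u : ℕ) ((u : ℕ) - 1) (fun j => j + 1) (1 ≤ (u : ℕ))
      (fun j => by omega) _ (pathIn_big k p)]
  rw [Fin.sum_univ_eq_sum_range (fun j => if 3 * j = (u : ℕ) then chordIn k p j else 0) (2 * k),
    sum_range_single' (2 * k) (u : ℕ) ((u : ℕ) / 3) (fun j => 3 * j) ((u : ℕ) % 3 = 0)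
      (fun j => by omega) _ (chordIn_big k p)]
  rw [Fin.sum_univ_eq_sum_range (fun j => if 3 * j + 2 = (u : ℕ) then chordIn k p j else 0) (2 * k),
    sum_range_single' (2 * k) (u : ℕ) ((u : ℕ) / 3) (fun j => 3 * j + 2) ((u : ℕ) % 3 = 2)
      (fun j => by omega) _ (chordIn_big k p)]
  rw [Fin.sum_univ_eq_sum_range (fun j => if 6 * j + 1 = (u : ℕ) then wIn k p j else 0) k,
    sum_range_single' k (u : ℕ) ((u : ℕ) / 6) (fun j => 6 * j + 1) ((u : ℕ) % 6 = 1)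
      (fun j => by omega) _ (wIn_big k p)]
  have hite : (if (u : ℕ) % 3 = 0 ∨ (u : ℕ) % 3 = 2 then chordIn k p ((u : ℕ) / 3) else 0)
      = (if (u : ℕ) % 3 = 0 then chordIn k p ((u : ℕ) / 3) else 0)
        + (if (u : ℕ) % 3 = 2 then chordIn k p ((u : ℕ) / 3) else 0) := by
    by_cases h0 : (u : ℕ) % 3 = 0 <;> by_cases h2 : (u : ℕ) % 3 = 2
    · exfalso; omega
    all_goals simp [h0, h2]
  rw [hite]

end degFormula

section withA
variable {k : ℕ} (A : Finset (Fin k))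

def removedB (b : ℕ) : Prop := b ∈ A.image (fun i => 2 * i.val)

instance : DecidablePred (removedB A) := fun b => by unfold removedB; infer_instance

def cb (j : ℕ) : ℕ := (j + (A.filter (fun i => 2 * i.val < j)).card) % 2

lemma cb_le_one (j : ℕ) : cb A j ≤ 1 := by unfold cb; omega

lemma cb_zero : cb A 0 = 0 := by simp [cb]

lemma removedB_even {b : ℕ} (h : removedB A b) : b % 2 = 0 := by
  obtain ⟨i, _, hib⟩ := Finset.mem_image.mp h
  omega

lemma removedB_lt {b : ℕ} (h : removedB A b) : b < 2 * k := by
  obtain ⟨i, _, hib⟩ := Finset.mem_image.mp h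
  have := i.isLt; omega

lemma removedB_iff (b : ℕ) (hb : b / 2 < k) (he : b % 2 = 0) :
    removedB A b ↔ (⟨b / 2, hb⟩ : Fin k) ∈ A := by
  unfold removedB
  rw [Finset.mem_image]
  constructor
  · rintro ⟨i, hiA, hib⟩
    have : (⟨b / 2, hb⟩ : Fin k) = i := by
      apply Fin.ext; simp; omega
    rwa [this]
  · intro h
    exact ⟨⟨b / 2, hb⟩, h, by simp; omega⟩

lemma card_filter_eq (b : ℕ) :
    (A.filter (fun i => 2 * i.val = b)).card = if removedB A b then 1 else 0 := by
  by_cases h : removedB A b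
  · obtain ⟨i, hiA, hib⟩ := Finset.mem_image.mp h
    rw [if_pos h, Finset.card_eq_one]
    refine ⟨i, ?_⟩
    ext j
    simp only [Finset.mem_filter, Finset.mem_singleton]
    constructor
    · rintro ⟨hjA, hj⟩
      apply Fin.ext; omega
    · rintro rfl
      exact ⟨hiA, by omega⟩
  · rw [if_neg h, Finset.card_eq_zero, Finset.filter_eq_empty_iff]
    intro i hi hc
    exact h (Finset.mem_image.mpr ⟨i, hi, hc⟩)

lemma card_filter_succ (b : ℕ) :
    (A.filter (fun i => 2 * i.val < b + 1)).card
      = (A.filter (fun i => 2 * i.val < b)).card + (if removedB A b then 1 else 0) := by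
  rw [← card_filter_eq A b, ← Finset.card_union_of_disjoint, ← Finset.filter_or]
  · apply congrArg
    apply Finset.filter_congr
    intro i _
    omega
  · rw [Finset.disjoint_left]
    intro x h1 h2
    simp only [Finset.mem_filter] at h1 h2
    omega

lemma cb_succ_removed {b : ℕ} (h : removedB A b) : cb A (b + 1) = cb A b := by
  unfold cb
  rw [card_filter_succ, if_pos h]
  omega

lemma cb_succ_not {b : ℕ} (h : ¬ removedB A b) : cb A (b + 1) = 1 - cb A b := by
  unfold cb
  rw [card_filter_succ, if_neg h]
  omega

lemma cb_2k (hA : Even A.card) : cb A (2 * k) = 0 := by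
  unfold cb
  rw [Finset.filter_true_of_mem (fun i _ => by have := i.isLt; omega)]
  obtain ⟨m, hm⟩ := hA
  omega

def inM (e : CoreEdge k) : Prop :=
  match e with
  | .inl (.inl j) =>
      if j.val % 3 = 0 then ¬ removedB A (j.val / 3) ∧ cb A (j.val / 3) = 0
      else if j.val % 3 = 1 then ¬ removedB A (j.val / 3) ∧ cb A (j.val / 3) = 1
      else cb A (j.val / 3 + 1) = 1
  | .inl (.inr b) => removedB A b.val ∧ cb A b.val = 0
  | .inr (.inl i) => i ∈ A
  | .inr (.inr i) => i ∉ A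

noncomputable instance : DecidablePred (inM A) := fun e => by
  unfold inM
  rcases e with (j | b) | (i | i) <;> dsimp only <;> infer_instance

noncomputable def Mdef : Finset (CoreEdge k) := univ.filter (inM A)

lemma pathIn_inM0 {j : ℕ} (h : j < 6 * k - 1) (h3 : j % 3 = 0) :
    pathIn k (inM A) j = if ¬ removedB A (j / 3) ∧ cb A (j / 3) = 0 then 1 else 0 := by
  unfold pathIn
  rw [dif_pos h]
  simp only [inM, h3, if_pos]

lemma pathIn_inM1 {j : ℕ} (h : j < 6 * k - 1) (h3 : j % 3 = 1) :
    pathIn k (inM A) j = if ¬ removedB A (j / 3) ∧ cb A (j / 3) = 1 then 1 else 0 := by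
  unfold pathIn
  rw [dif_pos h]
  simp only [inM, h3]
  norm_num

lemma pathIn_inM2 {j : ℕ} (h : j < 6 * k - 1) (h3 : j % 3 = 2) :
    pathIn k (inM A) j = if cb A (j / 3 + 1) = 1 then 1 else 0 := by
  unfold pathIn
  rw [dif_pos h]
  simp only [inM, h3]
  norm_num

lemma chordIn_inM {b : ℕ} (h : b < 2 * k) :
    chordIn k (inM A) b = if removedB A b ∧ cb A b = 0 then 1 else 0 := by
  unfold chordIn
  rw [dif_pos h]
  simp only [inM]

lemma wIn_inM (i : Fin k) :
    wIn k (inM A) i.val = if i ∈ A then 1 else 0 := by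
  rw [wIn_lt]
  simp only [inM]

lemma tIn_inM (i : Fin k) :
    tIn k (inM A) i.val = if i ∉ A then 1 else 0 := by
  rw [tIn_lt]
  simp only [inM]

lemma removedB_two (i : Fin k) : removedB A (2 * i.val) ↔ i ∈ A := by
  unfold removedB
  rw [Finset.mem_image]
  constructor
  · rintro ⟨j, hj, hji⟩
    have : j = i := by apply Fin.ext; omega
    rwa [this] at hj
  · intro h
    exact ⟨i, h, rfl⟩

lemma wIn_inM' (i : ℕ) (h : i < k) :
    wIn k (inM A) i = if removedB A (2 * i) then 1 else 0 := by
  rw [show i = ((⟨i, h⟩ : Fin k) : ℕ) from rfl, wIn_inM]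
  by_cases hm : (⟨i, h⟩ : Fin k) ∈ A
  · rw [if_pos hm, if_pos ((removedB_two A ⟨i, h⟩).mpr hm)]
  · rw [if_neg hm, if_neg (fun hc => hm ((removedB_two A ⟨i, h⟩).mp hc))]

open scoped Classical in
lemma Mdef_deg (hk : 1 ≤ k) (hA : Even A.card) (v : CoreVert k) :
    degIn (coreEnds k) (Mdef A) v
      = if (∃ i ∈ A, v = Sum.inr (Sum.inr i)) then 0 else 1 := by
  rcases v with u | (i | i)
  · rw [if_neg (by simp)]
    rw [show Mdef A = univ.filter (inM A) from rfl, deg_u]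
    have hn : (u : ℕ) < 6 * k := u.isLt
    have h3 : (u : ℕ) % 3 = 0 ∨ (u : ℕ) % 3 = 1 ∨ (u : ℕ) % 3 = 2 := by omega
    have hcb := cb_le_one A ((u : ℕ) / 3)
    rcases h3 with h3 | h3 | h3
    · rw [if_pos (Or.inl h3), if_neg (by omega : ¬ (u : ℕ) % 6 = 1)]
      rw [pathIn_inM0 A (by omega) h3, chordIn_inM A (by omega)]
      have h2 : (if 1 ≤ (u : ℕ) then pathIn k (inM A) ((u : ℕ) - 1) else 0)
          = if cb A ((u : ℕ) / 3) = 1 then 1 else 0 := by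
        by_cases h0 : 1 ≤ (u : ℕ)
        · rw [if_pos h0, pathIn_inM2 A (by omega) (by omega),
            show ((u : ℕ) - 1) / 3 + 1 = (u : ℕ) / 3 by omega]
        · have hu0 : (u : ℕ) = 0 := by omega
          rw [if_neg h0, hu0]
          simp [cb_zero]
      rw [h2]
      by_cases hrm : removedB A ((u : ℕ) / 3) <;> by_cases hc : cb A ((u : ℕ) / 3) = 0
      · simp [hrm, hc]
      · have h1 : cb A ((u : ℕ) / 3) = 1 := by omega
        simp [hrm, hc, h1]
      · simp [hrm, hc]
      · have h1 : cb A ((u : ℕ) / 3) = 1 := by omega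
        simp [hrm, hc, h1]
    · rw [if_neg (by omega : ¬ ((u : ℕ) % 3 = 0 ∨ (u : ℕ) % 3 = 2)), pathIn_inM1 A (by omega) h3,
        if_pos (by omega : 1 ≤ (u : ℕ)),
        pathIn_inM0 A (by omega) (by omega : ((u : ℕ) - 1) % 3 = 0),
        show ((u : ℕ) - 1) / 3 = (u : ℕ) / 3 by omega]
      have hpar : (u : ℕ) % 6 = 1 ∨ (u : ℕ) % 6 = 4 := by omega
      rcases hpar with hp | hp
      · rw [if_pos hp, wIn_inM' A ((u : ℕ) / 6) (by omega),
          show 2 * ((u : ℕ) / 6) = (u : ℕ) / 3 by omega]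
        by_cases hrm : removedB A ((u : ℕ) / 3) <;> by_cases hc : cb A ((u : ℕ) / 3) = 0
        · simp [hrm, hc]
        · have h1 : cb A ((u : ℕ) / 3) = 1 := by omega
          simp [hrm, hc, h1]
        · simp [hrm, hc]
        · have h1 : cb A ((u : ℕ) / 3) = 1 := by omega
          simp [hrm, hc, h1]
      · rw [if_neg (by omega : ¬ (u : ℕ) % 6 = 1)]
        have hrm : ¬ removedB A ((u : ℕ) / 3) := fun h => by
          have := removedB_even A h; omega
        by_cases hc : cb A ((u : ℕ) / 3) = 0
        · simp [hrm, hc]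
        · have h1 : cb A ((u : ℕ) / 3) = 1 := by omega
          simp [hrm, hc, h1]
    · rw [if_pos (Or.inr h3), if_neg (by omega : ¬ (u : ℕ) % 6 = 1),
        if_pos (by omega : 1 ≤ (u : ℕ)),
        pathIn_inM1 A (by omega) (by omega : ((u : ℕ) - 1) % 3 = 1),
        show ((u : ℕ) - 1) / 3 = (u : ℕ) / 3 by omega, chordIn_inM A (by omega)]
      by_cases hend : (u : ℕ) < 6 * k - 1
      · rw [pathIn_inM2 A hend h3]
        by_cases hrm : removedB A ((u : ℕ) / 3) <;> by_cases hc : cb A ((u : ℕ) / 3) = 0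
        · have hv : cb A ((u : ℕ) / 3 + 1) = 0 := by rw [cb_succ_removed A hrm, hc]
          simp [hrm, hc, hv]
        · have h1 : cb A ((u : ℕ) / 3) = 1 := by omega
          have hv : cb A ((u : ℕ) / 3 + 1) = 1 := by rw [cb_succ_removed A hrm, h1]
          simp [hrm, hc, h1, hv]
        · have hv : cb A ((u : ℕ) / 3 + 1) = 1 := by rw [cb_succ_not A hrm, hc]
          simp [hrm, hc, hv]
        · have h1 : cb A ((u : ℕ) / 3) = 1 := by omega
          have hv : cb A ((u : ℕ) / 3 + 1) = 0 := by rw [cb_succ_not A hrm, h1]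
          simp [hrm, hc, h1, hv]
      · rw [pathIn_big k _ _ (by omega)]
        have hb : (u : ℕ) / 3 = 2 * k - 1 := by omega
        have hrm : ¬ removedB A ((u : ℕ) / 3) := fun h => by
          have := removedB_even A h; omega
        have h1 : cb A ((u : ℕ) / 3) = 1 := by
          have h2k := cb_2k A hA
          have hs := cb_succ_not A hrm
          rw [hb, show 2 * k - 1 + 1 = 2 * k by omega] at hs
          rw [hb]
          rw [hb] at hcb
          omega
        simp [hrm, h1]
  · rw [if_neg (by simp), show Mdef A = univ.filter (inM A) from rfl, deg_w,
      wIn_inM, tIn_inM]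
    by_cases h : i ∈ A <;> simp [h]
  · rw [show Mdef A = univ.filter (inM A) from rfl, deg_t, tIn_inM]
    have hcond : (∃ i' ∈ A, (Sum.inr (Sum.inr i) : CoreVert k) = Sum.inr (Sum.inr i'))
        ↔ i ∈ A := by
      constructor
      · rintro ⟨j, hj, hji⟩
        simp only [Sum.inr.injEq] at hji
        rwa [hji]
      · intro h
        exact ⟨i, h, rfl⟩
    by_cases h : i ∈ A
    · rw [if_neg (by simp [h]), if_pos (hcond.mpr h)]
    · rw [if_pos h, if_neg (fun hc => h (hcond.mp hc))]

lemma ite_one_zero_inj {c1 c2 : Prop} [Decidable c1] [Decidable c2]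
    (h : (if c1 then (1 : ℕ) else 0) = (if c2 then 1 else 0)) : c1 ↔ c2 := by
  by_cases h1 : c1 <;> by_cases h2 : c2 <;> simp [h1, h2] at h ⊢

lemma degIn_sum (F : Finset (CoreEdge k)) :
    ∑ v : CoreVert k, degIn (coreEnds k) F v = 2 * F.card := by
  unfold degIn
  rw [Finset.sum_comm]
  rw [Finset.sum_congr rfl (fun e (_ : e ∈ F) => show
      (∑ v : CoreVert k, ((if (coreEnds k e).1 = v then 1 else 0)
        + (if (coreEnds k e).2 = v then 1 else 0))) = 2 by
    rw [Finset.sum_add_distrib, Finset.sum_ite_eq univ (coreEnds k e).1 (fun _ => (1 : ℕ)),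
      Finset.sum_ite_eq univ (coreEnds k e).2 (fun _ => (1 : ℕ))]
    simp)]
  rw [Finset.sum_const, smul_eq_mul, mul_comm]

open scoped Classical in
lemma no_matching_odd (hodd : ¬ Even A.card) :
    ¬ ∃ M : Finset (CoreEdge k),
        ∀ v : CoreVert k,
          degIn (coreEnds k) M v
            = if (∃ i ∈ A, v = Sum.inr (Sum.inr i)) then 0 else 1 := by
  rintro ⟨M, hM⟩
  have h1 := degIn_sum (k := k) M
  rw [Finset.sum_congr rfl (fun v _ => hM v)] at h1
  rw [Fintype.sum_sum_type, Fintype.sum_sum_type] at h1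
  have e1 : (∑ u : Fin (6 * k),
      if (∃ i ∈ A, (Sum.inl u : CoreVert k) = Sum.inr (Sum.inr i)) then (0:ℕ) else 1)
      = 6 * k := by simp
  have e2 : (∑ j : Fin k,
      if (∃ i ∈ A, (Sum.inr (Sum.inl j) : CoreVert k) = Sum.inr (Sum.inr i)) then (0:ℕ) else 1)
      = k := by simp
  have e3 : (∑ j : Fin k,
      if (∃ i ∈ A, (Sum.inr (Sum.inr j) : CoreVert k) = Sum.inr (Sum.inr i)) then (0:ℕ) else 1)
      = k - A.card := by
    rw [Finset.sum_congr rfl (fun j (_ : j ∈ univ) => show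
        (if (∃ i ∈ A, (Sum.inr (Sum.inr j) : CoreVert k) = Sum.inr (Sum.inr i)) then (0:ℕ) else 1)
          = (if j ∈ A then 0 else 1) by
      by_cases h : j ∈ A
      · rw [if_pos h, if_pos ⟨j, h, rfl⟩]
      · rw [if_neg h, if_neg]
        rintro ⟨i, hi, hij⟩
        simp only [Sum.inr.injEq] at hij
        exact h (hij ▸ hi))]
    have : (∑ j : Fin k, if j ∈ A then (0:ℕ) else 1)
        = (univ.filter (fun j => ¬ j ∈ A)).card := by
      rw [Finset.card_eq_sum_ones, Finset.sum_filter]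
      exact Finset.sum_congr rfl (fun j _ => by by_cases h : j ∈ A <;> simp [h])
    rw [this, show univ.filter (fun j => ¬ j ∈ A) = univ \ A from by ext j; simp,
      Finset.card_sdiff_of_subset (Finset.subset_univ A), Finset.card_univ, Fintype.card_fin]
  rw [e1, e2, e3] at h1
  have hle : A.card ≤ k := by
    have := Finset.card_le_univ A
    simpa using this
  rw [Nat.not_even_iff_odd] at hodd
  obtain ⟨m, hm⟩ := hodd
  omega

open scoped Classical in
lemma Mdef_unique (hk : 1 ≤ k) (hA : Even A.card) (M : Finset (CoreEdge k))
    (hM : ∀ v : CoreVert k,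
      degIn (coreEnds k) M v = if (∃ i ∈ A, v = Sum.inr (Sum.inr i)) then 0 else 1) :
    M = Mdef A := by
  have hMf : univ.filter (fun e => e ∈ M) = M := by ext e; simp
  -- equations for t and w vertices
  have Et : ∀ i : Fin k, tIn k (fun e => e ∈ M) i.val = if i ∈ A then 0 else 1 := by
    intro i
    have h := hM (Sum.inr (Sum.inr i))
    rw [← hMf, deg_t] at h
    rw [h]
    by_cases hi : i ∈ A
    · rw [if_pos ⟨i, hi, rfl⟩, if_pos hi]
    · rw [if_neg hi, if_neg]
      rintro ⟨i', hi', hii⟩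
      simp only [Sum.inr.injEq] at hii
      exact hi (hii ▸ hi')
  have Ew : ∀ i : Fin k, wIn k (fun e => e ∈ M) i.val = if i ∈ A then 1 else 0 := by
    intro i
    have h := hM (Sum.inr (Sum.inl i))
    rw [← hMf, deg_w, if_neg (by simp)] at h
    have h2 := Et i
    by_cases hi : i ∈ A
    · rw [if_pos hi] at h2 ⊢
      omega
    · rw [if_neg hi] at h2 ⊢
      omega
  have Eu' : ∀ n, n < 6 * k →
      pathIn k (fun e => e ∈ M) n
        + (if 1 ≤ n then pathIn k (fun e => e ∈ M) (n - 1) else 0)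
        + (if n % 3 = 0 ∨ n % 3 = 2 then chordIn k (fun e => e ∈ M) (n / 3) else 0)
        + (if n % 6 = 1 then wIn k (fun e => e ∈ M) (n / 6) else 0) = 1 := by
    intro n hn
    have h := hM (Sum.inl ⟨n, hn⟩)
    rw [← hMf, deg_u, if_neg (show ¬ ∃ i ∈ A,
      (Sum.inl (⟨n, hn⟩ : Fin (6 * k)) : CoreVert k) = Sum.inr (Sum.inr i) by simp)] at h
    exact h
  have key : ∀ b, b < 2 * k →
      (if b = 0 then 0 else pathIn k (fun e => e ∈ M) (3 * b - 1))
          = (if cb A b = 1 then 1 else 0) →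
      (pathIn k (fun e => e ∈ M) (3 * b)
          = (if ¬ removedB A b ∧ cb A b = 0 then 1 else 0)
        ∧ pathIn k (fun e => e ∈ M) (3 * b + 1)
          = (if ¬ removedB A b ∧ cb A b = 1 then 1 else 0)
        ∧ chordIn k (fun e => e ∈ M) b
          = (if removedB A b ∧ cb A b = 0 then 1 else 0)
        ∧ (if b + 1 = 0 then 0 else pathIn k (fun e => e ∈ M) (3 * (b + 1) - 1))
          = (if cb A (b + 1) = 1 then 1 else 0)) := by
    intro b hb hconn
    have e0 := Eu' (3 * b) (by omega)
    have e1 := Eu' (3 * b + 1) (by omega)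
    have e2 := Eu' (3 * b + 2) (by omega)
    rw [if_pos (by omega : (3 * b) % 3 = 0 ∨ (3 * b) % 3 = 2),
      if_neg (by omega : ¬ (3 * b) % 6 = 1),
      show (3 * b) / 3 = b by omega] at e0
    rw [if_neg (by omega : ¬ ((3 * b + 1) % 3 = 0 ∨ (3 * b + 1) % 3 = 2)),
      if_pos (by omega : 1 ≤ 3 * b + 1), show 3 * b + 1 - 1 = 3 * b by omega] at e1
    rw [if_pos (by omega : (3 * b + 2) % 3 = 0 ∨ (3 * b + 2) % 3 = 2),
      if_neg (by omega : ¬ (3 * b + 2) % 6 = 1),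
      if_pos (by omega : 1 ≤ 3 * b + 2), show 3 * b + 2 - 1 = 3 * b + 1 by omega,
      show (3 * b + 2) / 3 = b by omega] at e2
    have hleft : (if 1 ≤ 3 * b then pathIn k (fun e => e ∈ M) (3 * b - 1) else 0)
        = (if cb A b = 1 then 1 else 0) := by
      by_cases hb0 : b = 0
      · subst hb0
        rw [if_pos rfl] at hconn
        rw [if_neg (by omega)]
        exact hconn
      · rw [if_pos (by omega)]
        rw [if_neg hb0] at hconn
        exact hconn
    rw [hleft] at e0
    have hw1 : (if (3 * b + 1) % 6 = 1 then wIn k (fun e => e ∈ M) ((3 * b + 1) / 6) else 0)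
        = (if removedB A b then 1 else 0) := by
      by_cases hbe : b % 2 = 0
      · rw [if_pos (by omega)]
        have hlt : b / 2 < k := by omega
        have hEw := Ew ⟨b / 2, hlt⟩
        rw [show ((3 * b + 1) / 6) = ((⟨b / 2, hlt⟩ : Fin k) : ℕ) from by simp; omega, hEw]
        by_cases hm : (⟨b / 2, hlt⟩ : Fin k) ∈ A
        · have hr : removedB A (2 * (b / 2)) := (removedB_two A _).mpr hm
          rw [show 2 * (b / 2) = b by omega] at hr
          rw [if_pos hm, if_pos hr]
        · rw [if_neg hm, if_neg]
          intro hr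
          rw [show b = 2 * (b / 2) by omega] at hr
          exact hm ((removedB_two A _).mp hr)
      · rw [if_neg (by omega), if_neg (fun hr => by have := removedB_even A hr; omega)]
    rw [hw1] at e1
    have hq1 := pathIn_le k (fun e => e ∈ M) (3 * b)
    have hq2 := pathIn_le k (fun e => e ∈ M) (3 * b + 1)
    have hq3 := pathIn_le k (fun e => e ∈ M) (3 * b + 2)
    have hq4 := chordIn_le k (fun e => e ∈ M) b
    have hcb := cb_le_one A b
    rw [if_neg (by omega : ¬ b + 1 = 0), show 3 * (b + 1) - 1 = 3 * b + 2 by omega]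
    by_cases hrm : removedB A b
    · rw [if_pos hrm] at e1
      have hnext := cb_succ_removed A hrm
      simp only [hrm, not_true_eq_false, false_and, if_false, true_and, hnext]
      refine ⟨?_, ?_, ?_, ?_⟩ <;> split_ifs at e0 e2 ⊢ <;> omega
    · rw [if_neg hrm] at e1
      have hnext := cb_succ_not A hrm
      simp only [hrm, not_false_eq_true, true_and, false_and, if_false, hnext]
      refine ⟨?_, ?_, ?_, ?_⟩ <;> split_ifs at e0 e2 ⊢ <;> omega
  have main : ∀ b, b ≤ 2 * k →
      (if b = 0 then 0 else pathIn k (fun e => e ∈ M) (3 * b - 1))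
        = (if cb A b = 1 then 1 else 0) := by
    intro b
    induction b with
    | zero =>
      intro _
      rw [if_pos rfl, cb_zero]
      simp
    | succ n ih =>
      intro hb
      exact (key n (by omega) (ih (by omega))).2.2.2
  ext e
  have hmem : e ∈ Mdef A ↔ inM A e := by simp [Mdef]
  rw [hmem]
  rcases e with (j | c) | (i | i)
  · have hjl : (j : ℕ) < 6 * k - 1 := j.isLt
    have hP : pathIn k (fun e => e ∈ M) (j : ℕ)
        = if (Sum.inl (Sum.inl j) : CoreEdge k) ∈ M then 1 else 0 := pathIn_lt k _ j
    have h3 : (j : ℕ) % 3 = 0 ∨ (j : ℕ) % 3 = 1 ∨ (j : ℕ) % 3 = 2 := by omega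
    have hbb : (j : ℕ) / 3 < 2 * k := by omega
    rcases h3 with h3 | h3 | h3
    · have hk1 := (key ((j : ℕ) / 3) hbb (main _ (by omega))).1
      rw [show 3 * ((j : ℕ) / 3) = (j : ℕ) by omega, hP] at hk1
      rw [ite_one_zero_inj hk1]
      simp [inM, h3]
    · have hk1 := (key ((j : ℕ) / 3) hbb (main _ (by omega))).2.1
      rw [show 3 * ((j : ℕ) / 3) + 1 = (j : ℕ) by omega, hP] at hk1
      rw [ite_one_zero_inj hk1]
      simp [inM, h3]
    · have hm2 := main ((j : ℕ) / 3 + 1) (by omega)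
      rw [if_neg (by omega), show 3 * ((j : ℕ) / 3 + 1) - 1 = (j : ℕ) by omega, hP] at hm2
      rw [ite_one_zero_inj hm2]
      simp [inM, h3]
  · have hk1 := (key (c : ℕ) c.isLt (main _ (by omega))).2.2.1
    rw [chordIn_lt] at hk1
    rw [ite_one_zero_inj hk1]
    simp [inM]
  · have hEw := Ew i
    rw [wIn_lt] at hEw
    rw [ite_one_zero_inj hEw]
    simp [inM]
  · have hEt := Et i
    rw [tIn_lt] at hEt
    have h2 : (if (Sum.inr (Sum.inr i) : CoreEdge k) ∈ M then (1 : ℕ) else 0)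
        = (if i ∉ A then 1 else 0) := by
      rw [hEt]
      by_cases h : i ∈ A <;> simp [h]
    rw [ite_one_zero_inj h2]
    simp [inM]

end withA
end CoreProof

open scoped Classical in
/-- Observation 3.4 of the paper: for every subset `A` of `{t_1, …, t_k}`,
if `|A|` is even there is exactly one matching of the core `S′` covering every vertex not
in `A` exactly once and covering no vertex of `A`, and if `|A|` is odd there is none. -/
theorem core_matching_extension (k : ℕ) (hk : 1 ≤ k) (A : Finset (Fin k)) :
    (Even A.card → ∃! M : Finset (CoreEdge k),
        ∀ v : CoreVert k,
          degIn (coreEnds k) M v = if (∃ i ∈ A, v = Sum.inr (Sum.inr i)) then 0 else 1) ∧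
    (¬ Even A.card → ¬ ∃ M : Finset (CoreEdge k),
        ∀ v : CoreVert k,
          degIn (coreEnds k) M v = if (∃ i ∈ A, v = Sum.inr (Sum.inr i)) then 0 else 1) := by
  constructor
  · intro hA
    exact ⟨CoreProof.Mdef A, CoreProof.Mdef_deg A hk hA,
      fun M' hM' => CoreProof.Mdef_unique A hk hA M' hM'⟩
  · intro hodd
    exact CoreProof.no_matching_odd A hodd
end

section
/- Let n ≥ 1 and let a_1, …, a_{2n} be nonzero complex numbers with a_1 + ⋯ + a_{2n} = 1. Then for every δ > 0 there exists c > 0 such that for every positive integer N, every integer k, and every z ∈ ℂ with |z| < cN satisfying Σ_{i=1}^{n} ( Log(1 + a_{2i−1}·z/N) − Log(1 − a_{2i}·z/N) ) = (2k+1)πi/N, one has |z − (2k+1)πi| < δ·|2k+1|. (This is Lemma 5.2 of the paper: for |z| < cN, all solutions of the finite-lattice equation are of the form z_k = (2k+1)πi + ε_k with ε_k small.) -/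
open Complex Finset

lemma pair_sum {M : Type*} [AddCommMonoid M] (g : ℕ → M) (n : ℕ) :
    ∑ i ∈ Finset.range n, (g (2 * i) + g (2 * i + 1)) = ∑ j ∈ Finset.range (2 * n), g j := by
  induction n with
  | zero => simp
  | succ m ih =>
    rw [Finset.sum_range_succ, ih, show 2 * (m + 1) = 2 * m + 1 + 1 by ring,
      Finset.sum_range_succ, Finset.sum_range_succ, add_assoc]

lemma log_quad_bound {u : ℂ} (hu : ‖u‖ ≤ 1 / 2) :
    ‖Complex.log (1 + u) - u‖ ≤ ‖u‖ ^ 2 := by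
  have h1 : ‖u‖ < 1 := lt_of_le_of_lt hu (by norm_num)
  have h3 : (0:ℝ) < 1 - ‖u‖ := by linarith
  have hinv : (1 - ‖u‖)⁻¹ ≤ 2 := by
    rw [inv_le_comm₀ (by linarith) (by norm_num)]; linarith
  calc ‖Complex.log (1 + u) - u‖ ≤ ‖u‖ ^ 2 * (1 - ‖u‖)⁻¹ / 2 :=
        Complex.norm_log_one_add_sub_self_le h1
    _ ≤ ‖u‖ ^ 2 := by nlinarith [sq_nonneg ‖u‖, norm_nonneg u]

set_option maxHeartbeats 1000000 in
/-- Lemma 5.2 of the paper: let `a_1, …, a_{2n}` be nonzero complex numbers with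
sum `1`. For every `δ > 0` there is `c > 0` such that for every positive integer `N`, every
integer `k` and every `z` with `|z| < cN` solving
`Σ_i (Log(1 + a_{2i−1} z/N) − Log(1 − a_{2i} z/N)) = (2k+1)πi/N`, one has
`|z − (2k+1)πi| < δ·|2k+1|`. -/
theorem solutions_near_odd_multiples (n : ℕ) (hn : 1 ≤ n)
    (a : Fin (2 * n) → ℂ) (ha : ∀ i, a i ≠ 0) (hsum : ∑ i, a i = 1) :
    ∀ δ : ℝ, 0 < δ → ∃ c : ℝ, 0 < c ∧
      ∀ N : ℕ, 0 < N → ∀ k : ℤ, ∀ z : ℂ,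
        ‖z‖ < c * N →
        (∑ i : Fin n,
            (Complex.log (1 + a ⟨2 * i.val, by have := i.isLt; omega⟩ * z / N) -
              Complex.log (1 - a ⟨2 * i.val + 1, by have := i.isLt; omega⟩ * z / N)) =
          ((2 * k + 1 : ℤ) : ℂ) * Real.pi * Complex.I / N) →
        ‖z - ((2 * k + 1 : ℤ) : ℂ) * Real.pi * Complex.I‖ <
          δ * |((2 * k + 1 : ℤ) : ℝ)| := by
  intro δ hδ
  -- the constants
  set S : ℝ := ∑ i, ‖a i‖ ^ 2 with hSdef
  have hS0 : 0 < S := by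
    have i0 : Fin (2 * n) := ⟨0, by omega⟩
    have h1 : 0 < ‖a i0‖ ^ 2 := pow_pos (norm_pos_iff.mpr (ha i0)) 2
    have h2 : ‖a i0‖ ^ 2 ≤ S :=
      Finset.single_le_sum (f := fun j => ‖a j‖ ^ 2) (fun j _ => by positivity)
        (Finset.mem_univ i0)
    linarith
  set A : ℝ := 1 + ∑ i, ‖a i‖ with hAdef
  have hA0 : 0 < A := by
    have : (0:ℝ) ≤ ∑ i, ‖a i‖ := Finset.sum_nonneg fun i _ => norm_nonneg _
    linarith
  have hAi : ∀ i, ‖a i‖ ≤ A := by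
    intro i
    have h1 : ‖a i‖ ≤ ∑ j, ‖a j‖ :=
      Finset.single_le_sum (fun j _ => norm_nonneg (a j)) (Finset.mem_univ i)
    linarith
  have hπ : (0:ℝ) < Real.pi := Real.pi_pos
  set c : ℝ := min (1 / (2 * A)) (min (1 / (2 * S)) (δ / (4 * S * Real.pi))) with hcdef
  have hc0 : 0 < c := by positivity
  refine ⟨c, hc0, ?_⟩
  intro N hN k z hz heq
  have hNR : (0:ℝ) < (N:ℝ) := by exact_mod_cast hN
  have hNC : (N:ℂ) ≠ 0 := by exact_mod_cast hN.ne'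
  set t : ℂ := z / (N:ℂ) with htdef
  -- the ℕ-indexed coefficients
  set b : ℕ → ℂ := fun j => if h : j < 2 * n then a ⟨j, h⟩ else 0 with hbdef
  have hb_sum : ∑ j ∈ Finset.range (2 * n), b j = 1 := by
    rw [← Fin.sum_univ_eq_sum_range]
    rw [← hsum]
    apply Finset.sum_congr rfl
    intro i _
    simp [hbdef, i.isLt]
  have hS_sum : ∑ j ∈ Finset.range (2 * n), ‖b j‖ ^ 2 = S := by
    rw [← Fin.sum_univ_eq_sum_range]
    apply Finset.sum_congr rfl
    intro i _
    simp [hbdef, i.isLt]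
  -- |t| < c
  have htn : ‖t‖ < c := by
    rw [htdef]
    rw [norm_div, Complex.norm_natCast, div_lt_iff₀ hNR]
    simpa using hz
  -- each |b j * t| ≤ 1/2
  have hbt : ∀ j, ‖b j * t‖ ≤ 1 / 2 := by
    intro j
    by_cases h : j < 2 * n
    · rw [norm_mul]
      have h1 : ‖b j‖ ≤ A := by rw [hbdef]; simp only [dif_pos h]; exact hAi _
      have h2 : ‖t‖ ≤ 1 / (2 * A) := le_trans htn.le (min_le_left _ _)
      calc ‖b j‖ * ‖t‖ ≤ A * (1 / (2 * A)) := by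
            apply mul_le_mul h1 h2 (norm_nonneg _) hA0.le
        _ = 1 / 2 := by field_simp
    · simp [hbdef, dif_neg h]
  -- rewrite the hypothesis sum
  set f : ℕ → ℂ := fun i =>
    Complex.log (1 + b (2 * i) * t) - Complex.log (1 - b (2 * i + 1) * t) with hfdef
  have hsum_eq : (∑ i : Fin n,
      (Complex.log (1 + a ⟨2 * i.val, by have := i.isLt; omega⟩ * z / N) -
        Complex.log (1 - a ⟨2 * i.val + 1, by have := i.isLt; omega⟩ * z / N))) =
      ∑ i ∈ Finset.range n, f i := by
    rw [← Fin.sum_univ_eq_sum_range]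
    apply Finset.sum_congr rfl
    intro i _
    have h1 : 2 * i.val < 2 * n := by have := i.isLt; omega
    have h2 : 2 * i.val + 1 < 2 * n := by have := i.isLt; omega
    simp only [hfdef, hbdef, dif_pos h1, dif_pos h2, htdef, mul_div_assoc]
  rw [hsum_eq] at heq
  -- key estimate : ‖∑ f - t‖ ≤ S * ‖t‖^2
  have ht_pair : t = ∑ i ∈ Finset.range n, (b (2 * i) * t + b (2 * i + 1) * t) := by
    rw [pair_sum (fun j => b j * t) n, ← Finset.sum_mul, hb_sum, one_mul]
  have hest : ‖(∑ i ∈ Finset.range n, f i) - t‖ ≤ S * ‖t‖ ^ 2 := by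
    have hre : (∑ i ∈ Finset.range n, f i) - t =
        ∑ i ∈ Finset.range n,
          ((Complex.log (1 + b (2 * i) * t) - b (2 * i) * t) -
            (Complex.log (1 + -(b (2 * i + 1) * t)) - -(b (2 * i + 1) * t))) := by
      nth_rewrite 1 [ht_pair]
      rw [← Finset.sum_sub_distrib]
      apply Finset.sum_congr rfl
      intro i _
      simp only [hfdef]
      rw [show (1:ℂ) - b (2 * i + 1) * t = 1 + -(b (2 * i + 1) * t) by ring]
      ring
    rw [hre]
    calc ‖∑ i ∈ Finset.range n, _‖ ≤
        ∑ i ∈ Finset.range n, (‖b (2 * i) * t‖ ^ 2 + ‖b (2 * i + 1) * t‖ ^ 2) := by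
          refine le_trans (norm_sum_le _ _) (Finset.sum_le_sum fun i _ => ?_)
          refine le_trans (norm_sub_le _ _) (add_le_add (log_quad_bound (hbt _)) ?_)
          have := log_quad_bound (u := -(b (2 * i + 1) * t)) (by rw [norm_neg]; exact hbt _)
          rwa [norm_neg] at this
      _ = ∑ j ∈ Finset.range (2 * n), ‖b j * t‖ ^ 2 := pair_sum (fun j => ‖b j * t‖ ^ 2) n
      _ = S * ‖t‖ ^ 2 := by
          rw [← hS_sum, Finset.sum_mul]
          apply Finset.sum_congr rfl
          intro j _
          rw [norm_mul, mul_pow]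
  -- put things together
  set w : ℂ := ((2 * k + 1 : ℤ) : ℂ) * Real.pi * Complex.I with hwdef
  have hzw : z - w = (N:ℂ) * (t - ∑ i ∈ Finset.range n, f i) := by
    rw [heq, htdef]
    field_simp
  have hzwn : ‖z - w‖ ≤ S * ‖z‖ ^ 2 / N := by
    rw [hzw, norm_mul, Complex.norm_natCast, ← norm_neg, neg_sub]
    calc (N:ℝ) * ‖(∑ i ∈ Finset.range n, f i) - t‖ ≤ (N:ℝ) * (S * ‖t‖ ^ 2) := by
          exact mul_le_mul_of_nonneg_left hest hNR.le
      _ = S * ‖z‖ ^ 2 / N := by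
          rw [htdef, norm_div, Complex.norm_natCast, div_pow]
          field_simp
  have hcS : c ≤ 1 / (2 * S) := le_trans (min_le_right _ _) (min_le_left _ _)
  have hcδ : c ≤ δ / (4 * S * Real.pi) := le_trans (min_le_right _ _) (min_le_right _ _)
  have hzn : ‖z‖ < c * N := by simpa using hz
  have hzn0 : (0:ℝ) ≤ ‖z‖ := norm_nonneg z
  -- ‖z - w‖ ≤ S*c*‖z‖
  have h1 : ‖z - w‖ ≤ S * c * ‖z‖ := by
    calc ‖z - w‖ ≤ S * ‖z‖ ^ 2 / N := hzwn
      _ ≤ S * c * ‖z‖ := by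
        rw [div_le_iff₀ hNR]
        nlinarith [mul_le_mul_of_nonneg_left hzn.le (mul_nonneg hS0.le hzn0)]
  have hwnorm : ‖w‖ = |((2 * k + 1 : ℤ) : ℝ)| * Real.pi := by
    rw [hwdef, norm_mul, norm_mul, Complex.norm_I, Complex.norm_intCast,
      Complex.norm_real, Real.norm_eq_abs, abs_of_pos hπ, mul_one]
  have hztri : ‖z‖ ≤ ‖w‖ + ‖z - w‖ := by
    calc ‖z‖ = ‖w + (z - w)‖ := by congr 1; ring
      _ ≤ ‖w‖ + ‖z - w‖ := norm_add_le _ _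
  have hSc : S * c ≤ 1 / 2 := by
    calc S * c ≤ S * (1 / (2 * S)) := mul_le_mul_of_nonneg_left hcS hS0.le
      _ = 1 / 2 := by field_simp
  have h2 : ‖z - w‖ ≤ 2 * (S * c) * ‖w‖ := by
    nlinarith [h1, hztri, hSc, norm_nonneg (z - w), norm_nonneg w,
      mul_le_mul_of_nonneg_left hztri (mul_nonneg hS0.le hc0.le),
      mul_le_mul_of_nonneg_right hSc (norm_nonneg (z - w))]
  have hk1 : (1:ℝ) ≤ |((2 * k + 1 : ℤ) : ℝ)| := by
    have h0 : (2 * k + 1 : ℤ) ≠ 0 := by omega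
    have h3 : (1:ℤ) ≤ |2 * k + 1| := Int.one_le_abs h0
    rw [← Int.cast_abs]
    exact_mod_cast h3
  have h4 : 2 * (S * c) * Real.pi ≤ δ / 2 := by
    have : S * c ≤ S * (δ / (4 * S * Real.pi)) := mul_le_mul_of_nonneg_left hcδ hS0.le
    have h5 : S * (δ / (4 * S * Real.pi)) = δ / (4 * Real.pi) := by field_simp
    calc 2 * (S * c) * Real.pi ≤ 2 * (δ / (4 * Real.pi)) * Real.pi := by nlinarith
      _ = δ / 2 := by field_simp; ring
  have final : ‖z - w‖ < δ * |((2 * k + 1 : ℤ) : ℝ)| := by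
    calc ‖z - w‖ ≤ 2 * (S * c) * ‖w‖ := h2
      _ = 2 * (S * c) * Real.pi * |((2 * k + 1 : ℤ) : ℝ)| := by rw [hwnorm]; ring
      _ ≤ δ / 2 * |((2 * k + 1 : ℤ) : ℝ)| := by
          apply mul_le_mul_of_nonneg_right h4 (abs_nonneg _)
      _ < δ * |((2 * k + 1 : ℤ) : ℝ)| := by nlinarith
  simpa using final
end
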